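/- Let a_1, …, a_m and b_1, …, b_p be nonnegative integers with a_1+⋯+a_m = b_1+⋯+b_p = N. Then in ℚ(q): [N; b_1,…,b_p] = ∑ q^{X(j)} · ∏_{β=1}^{m} [a_β; j_{1,β}, j_{2,β}, …, j_{p,β}], where the sum is over all m·p nonnegative integers j_{α,β} (α = 1,…,p; β = 1,…,m) satisfying j_{1,v}+j_{2,v}+⋯+j_{p,v} = a_v for each v = 1,…,m and j_{w,1}+j_{w,2}+⋯+j_{w,m} = b_w for each w = 1,…,p, and where X(j) = 2 ∑_{1 ≤ l_1 < l_2 ≤ p} ∑_{1 ≤ u_1 < u_2 ≤ m} j_{l_1,u_1} j_{l_2,u_2}. -/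

import Mathlib

noncomputable section

open Finset

/-- The field `ℚ(q)` of rational functions in one variable. -/
abbrev F : Type := RatFunc ℚ

/-- The variable `q`. -/
def q : F := RatFunc.X

/-- The q-Pochhammer symbol `(x; y)_n = ∏_{j=0}^{n-1} (1 - x yʲ)`. -/
def qPoch (x y : F) (n : ℕ) : F := ∏ i ∈ Finset.range n, (1 - x * y ^ i)

/-- `(q²;q²)_m = ∏_{i=1}^{m} (1 - q^{2i})`. -/
def qp (m : ℕ) : F := qPoch (q ^ 2) (q ^ 2) m

/-- The positive quantum binomial coefficient `[N; k]₊`. -/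
def qbin (N k : ℕ) : F := qp N / (qp k * qp (N - k))

/-- The quantum multinomial coefficient `[N; d_1, …, d_n]`. -/
def qmul (N : ℕ) {n : ℕ} (d : Fin n → ℕ) : F := qp N / ∏ i, qp (d i)

/-! ### Auxiliary lemmas -/

lemma one_sub_q_pow_ne_zero {k : ℕ} (hk : k ≠ 0) : (1 : F) - q ^ k ≠ 0 := by
  intro h
  have h1 : (RatFunc.X : F) ^ k = 1 := by
    have : q ^ k = 1 := by linear_combination -h
    simpa [q] using this
  rw [← RatFunc.algebraMap_X (K := ℚ), ← map_pow, ← map_one (algebraMap (Polynomial ℚ) F)] at h1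
  have h2 := RatFunc.algebraMap_injective ℚ h1
  have := congrArg Polynomial.natDegree h2
  simp [Polynomial.natDegree_X_pow] at this
  exact hk this

lemma qp_zero : qp 0 = 1 := by simp [qp, qPoch]

lemma qp_succ (n : ℕ) : qp (n + 1) = qp n * (1 - q ^ (2 * n + 2)) := by
  simp only [qp, qPoch, Finset.prod_range_succ]
  ring

lemma qp_ne_zero (n : ℕ) : qp n ≠ 0 := by
  induction n with
  | zero => simp [qp_zero]
  | succ n ih =>
    rw [qp_succ]
    exact mul_ne_zero ih (one_sub_q_pow_ne_zero (by omega))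

lemma qmul_zero {n : ℕ} : qmul 0 (fun _ : Fin n => 0) = 1 := by
  simp [qmul, qp_zero]

/-! ### Telescoping q-Pascal identity -/

/-- partial sums -/
def pre {p : ℕ} (d : Fin p → ℕ) (k : ℕ) : ℕ := ∑ l : Fin p, if l.val < k then d l else 0

lemma pre_eq_sum_Iio {p : ℕ} (d : Fin p → ℕ) (w : Fin p) : pre d w.val = ∑ l ∈ Iio w, d l := by
  rw [pre, ← Finset.sum_filter]
  congr 1
  ext l
  simp only [Finset.mem_filter, Finset.mem_univ, true_and, Finset.mem_Iio, Fin.lt_def]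

lemma pre_zero {p : ℕ} (d : Fin p → ℕ) : pre d 0 = 0 := by simp [pre]

lemma pre_of_ge {p : ℕ} (d : Fin p → ℕ) {k : ℕ} (h : p ≤ k) : pre d k = ∑ l, d l := by
  unfold pre
  apply Finset.sum_congr rfl
  intro l _
  rw [if_pos (lt_of_lt_of_le l.isLt h)]

lemma pre_succ {p : ℕ} (d : Fin p → ℕ) (w : Fin p) : pre d (w.val + 1) = pre d w.val + d w := by
  unfold pre
  have key : ∀ l : Fin p, (if l.val < w.val + 1 then d l else 0)
      = (if l.val < w.val then d l else 0) + (if l = w then d l else 0) := by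
    intro l
    rcases lt_trichotomy l.val w.val with h | h | h
    · rw [if_pos (by omega), if_pos h, if_neg (by simp [Fin.ext_iff]; omega)]; ring
    · rw [if_pos (by omega), if_neg (by omega), if_pos (by simp [Fin.ext_iff, h])]; ring
    · rw [if_neg (by omega), if_neg (by omega), if_neg (by simp [Fin.ext_iff]; omega)]
  rw [Finset.sum_congr rfl (fun l _ => key l), Finset.sum_add_distrib, Finset.sum_ite_eq' univ w d]
  simp

lemma pascal_core {p : ℕ} (d : Fin p → ℕ) :
    ∑ w : Fin p, q ^ (2 * ∑ l ∈ Iio w, d l) * (1 - q ^ (2 * d w))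
      = 1 - q ^ (2 * ∑ l, d l) := by
  have key : ∀ w : Fin p, q ^ (2 * ∑ l ∈ Iio w, d l) * (1 - q ^ (2 * d w))
      = q ^ (2 * pre d w.val) - q ^ (2 * pre d (w.val + 1)) := by
    intro w
    rw [← pre_eq_sum_Iio, pre_succ, Nat.mul_add, pow_add]
    ring
  rw [Finset.sum_congr rfl (fun w _ => key w)]
  rw [Fin.sum_univ_eq_sum_range (fun k => q ^ (2 * pre d k) - q ^ (2 * pre d (k + 1))) p]
  rw [Finset.sum_range_sub' (fun k => q ^ (2 * pre d k)) p]
  rw [pre_zero, pre_of_ge d (le_refl p)]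
  simp

lemma prod_qp_ne_zero {p : ℕ} (e : Fin p → ℕ) : (∏ i, qp (e i)) ≠ 0 :=
  Finset.prod_ne_zero_iff.mpr fun _ _ => qp_ne_zero _

lemma prod_qp_update {p : ℕ} (e : Fin p → ℕ) (w : Fin p) :
    ∏ i, qp (Function.update e w (e w + 1) i)
      = (1 - q ^ (2 * e w + 2)) * ∏ i, qp (e i) := by
  simp only [Function.apply_update (fun _ n => qp n) e w (e w + 1)]
  rw [Finset.prod_update_of_mem (Finset.mem_univ w), qp_succ,
    ← Finset.mul_prod_erase univ (fun i => qp (e i)) (Finset.mem_univ w),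
    Finset.sdiff_singleton_eq_erase]
  ring

lemma conv {p : ℕ} (M : ℕ) (e : Fin p → ℕ) (w : Fin p) :
    (1 - q ^ (2 * (e w + 1))) * (qp M / ∏ i, qp (Function.update e w (e w + 1) i))
      = qmul M e := by
  rw [show 2 * (e w + 1) = 2 * e w + 2 from by ring, prod_qp_update, qmul]
  have h1 : (1 : F) - q ^ (2 * e w + 2) ≠ 0 := one_sub_q_pow_ne_zero (by omega)
  have h2 := prod_qp_ne_zero e
  field_simp

lemma pascal {p : ℕ} (N : ℕ) (d : Fin p → ℕ) (hd : ∑ w, d w = N + 1) :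
    qmul (N + 1) d = ∑ w : Fin p, q ^ (2 * ∑ l ∈ Iio w, d l)
      * ((1 - q ^ (2 * d w)) * (qp N / ∏ i, qp (d i))) := by
  have step : ∀ w : Fin p, q ^ (2 * ∑ l ∈ Iio w, d l)
        * ((1 - q ^ (2 * d w)) * (qp N / ∏ i, qp (d i)))
      = (q ^ (2 * ∑ l ∈ Iio w, d l) * (1 - q ^ (2 * d w))) * (qp N / ∏ i, qp (d i)) := by
    intro w; ring
  rw [Finset.sum_congr rfl (fun w _ => step w), ← Finset.sum_mul, pascal_core, hd,
    qmul, qp_succ, show 2 * (N + 1) = 2 * N + 2 from by ring]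
  have h2 := prod_qp_ne_zero d
  field_simp

/-! ### The set of matrices with given row and column sums -/

def SS (M : ℕ) {m p : ℕ} (A : Fin m → ℕ) (B : Fin p → ℕ) : Finset (Fin p → Fin m → ℕ) :=
  (Fintype.piFinset fun _ : Fin p =>
      Fintype.piFinset fun _ : Fin m => Finset.range (M + 1)).filter
    (fun J => (∀ v : Fin m, ∑ w : Fin p, J w v = A v) ∧
      (∀ w : Fin p, ∑ v : Fin m, J w v = B w))

lemma mem_SS {M m p : ℕ} {A : Fin m → ℕ} {B : Fin p → ℕ} (hB : ∑ w, B w ≤ M)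
    {J : Fin p → Fin m → ℕ} :
    J ∈ SS M A B ↔ ((∀ v : Fin m, ∑ w : Fin p, J w v = A v) ∧
      (∀ w : Fin p, ∑ v : Fin m, J w v = B w)) := by
  constructor
  · intro h; exact (Finset.mem_filter.mp h).2
  · intro h
    refine Finset.mem_filter.mpr ⟨?_, h⟩
    simp only [Fintype.mem_piFinset, Finset.mem_range]
    intro w v
    have h1 : J w v ≤ ∑ v', J w v' :=
      Finset.single_le_sum (fun _ _ => Nat.zero_le _) (Finset.mem_univ v)
    have h2 : B w ≤ ∑ w', B w' :=
      Finset.single_le_sum (fun _ _ => Nat.zero_le _) (Finset.mem_univ w)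
    have h3 := h.2 w
    omega

/-! ### Fin sum helpers -/

lemma sum_univ_last {M : Type*} [AddCommMonoid M] {m : ℕ} (f : Fin (m + 1) → M) :
    ∑ u, f u = (∑ u ∈ Iio (Fin.last m), f u) + f (Fin.last m) := by
  have huniv : (univ : Finset (Fin (m + 1))) = insert (Fin.last m) (Iio (Fin.last m)) := by
    ext u
    simp only [Finset.mem_univ, Finset.mem_insert, Finset.mem_Iio, true_iff]
    rcases eq_or_ne u (Fin.last m) with h | h
    · exact Or.inl h
    · exact Or.inr (lt_of_le_of_ne (Fin.le_last u) h)
  rw [huniv, Finset.sum_insert (by simp only [Finset.mem_Iio, lt_self_iff_false, not_false_iff])]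
  exact add_comm _ _

lemma Iio_castSucc_eq {m : ℕ} (i : Fin m) :
    (Iio (Fin.castSucc i) : Finset (Fin (m + 1))) = (Iio i).map Fin.castSuccEmb := by
  ext u
  simp only [Finset.mem_Iio, Finset.mem_map, Fin.coe_castSuccEmb]
  constructor
  · intro hu
    have h1 : u.val < i.val := hu
    have h2 : u.val < m := by omega
    exact ⟨⟨u.val, h2⟩, h1, Fin.ext rfl⟩
  · rintro ⟨v, hv, rfl⟩
    exact hv

lemma sum_Iio_castSucc {M : Type*} [AddCommMonoid M] {m : ℕ} (f : Fin (m + 1) → M) (i : Fin m) :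
    ∑ u ∈ Iio (Fin.castSucc i), f u = ∑ u ∈ Iio i, f (Fin.castSucc u) := by
  rw [Iio_castSucc_eq, Finset.sum_map]
  exact Finset.sum_congr rfl fun u _ => by rw [show Fin.castSuccEmb u = Fin.castSucc u from rfl]

lemma Iio_last_eq {m : ℕ} :
    (Iio (Fin.last m) : Finset (Fin (m + 1))) = univ.map Fin.castSuccEmb := by
  ext u
  simp only [Finset.mem_Iio, Finset.mem_map, Finset.mem_univ, true_and, Fin.coe_castSuccEmb]
  constructor
  · intro hu
    have h1 : u.val < m := hu
    exact ⟨⟨u.val, h1⟩, Fin.ext rfl⟩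
  · rintro ⟨v, rfl⟩
    exact v.isLt

/-! ### The inversion statistic -/

def Xe {m p : ℕ} (J : Fin p → Fin m → ℕ) : ℕ :=
  ∑ l₂ : Fin p, ∑ l₁ ∈ Iio l₂, ∑ u₂ : Fin m, ∑ u₁ ∈ Iio u₂, J l₁ u₁ * J l₂ u₂

lemma sum_ite_const {α M : Type*} [AddCommMonoid M] (s : Finset α) (c : Prop) [Decidable c]
    (f : α → M) : ∑ x ∈ s, (if c then f x else 0) = if c then ∑ x ∈ s, f x else 0 := by
  split <;> simp

/-- increment at `(w, Fin.last m)` -/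
def inc {m p : ℕ} (J : Fin p → Fin (m + 1) → ℕ) (w : Fin p) : Fin p → Fin (m + 1) → ℕ :=
  Function.update J w (Function.update (J w) (Fin.last m) (J w (Fin.last m) + 1))

/-- decrement at `(w, Fin.last m)` -/
def dec {m p : ℕ} (J : Fin p → Fin (m + 1) → ℕ) (w : Fin p) : Fin p → Fin (m + 1) → ℕ :=
  Function.update J w (Function.update (J w) (Fin.last m) (J w (Fin.last m) - 1))

lemma inc_apply {m p : ℕ} (J : Fin p → Fin (m + 1) → ℕ) (w : Fin p) (l : Fin p)
    (u : Fin (m + 1)) :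
    inc J w l u = J l u + (if l = w ∧ u = Fin.last m then 1 else 0) := by
  unfold inc
  rcases eq_or_ne l w with h | h
  · subst h
    rcases eq_or_ne u (Fin.last m) with h2 | h2
    · subst h2; simp
    · simp [Function.update_apply, h2]
  · simp [Function.update_apply, h]

lemma inc_apply_ne {m p : ℕ} (J : Fin p → Fin (m + 1) → ℕ) (w : Fin p) (l : Fin p)
    (u : Fin (m + 1)) (h : ¬(l = w ∧ u = Fin.last m)) : inc J w l u = J l u := by
  rw [inc_apply, if_neg h]; ring

lemma Xe_inc {m p : ℕ} (J : Fin p → Fin (m + 1) → ℕ) (w : Fin p) :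
    Xe (inc J w) = Xe J + ∑ l ∈ Iio w, ∑ u ∈ Iio (Fin.last m), J l u := by
  unfold Xe
  have step : ∀ l₂ : Fin p, ∀ l₁ ∈ Iio l₂, ∀ u₂ : Fin (m + 1), ∀ u₁ ∈ Iio u₂,
      inc J w l₁ u₁ * inc J w l₂ u₂
        = J l₁ u₁ * J l₂ u₂ + (if l₂ = w ∧ u₂ = Fin.last m then J l₁ u₁ else 0) := by
    intro l₂ _ _ u₂ u₁ hu₁
    have hu₁m : u₁ ≠ Fin.last m := by
      intro hh
      have h1 : u₁ < u₂ := Finset.mem_Iio.mp hu₁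
      have h1' : u₁.val < u₂.val := h1
      have h2 : u₂.val < m + 1 := u₂.isLt
      rw [hh] at h1'
      simp only [Fin.val_last] at h1'
      omega
    rw [inc_apply_ne J w _ _ (fun hh => hu₁m hh.2), inc_apply]
    rcases Classical.em (l₂ = w ∧ u₂ = Fin.last m) with h | h
    · rw [if_pos h, if_pos h]; ring
    · rw [if_neg h, if_neg h]; ring
  calc ∑ l₂ : Fin p, ∑ l₁ ∈ Iio l₂, ∑ u₂ : Fin (m + 1), ∑ u₁ ∈ Iio u₂,
        inc J w l₁ u₁ * inc J w l₂ u₂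
      = ∑ l₂ : Fin p, ∑ l₁ ∈ Iio l₂, ∑ u₂ : Fin (m + 1), ∑ u₁ ∈ Iio u₂,
        (J l₁ u₁ * J l₂ u₂ + (if l₂ = w ∧ u₂ = Fin.last m then J l₁ u₁ else 0)) := by
        refine Finset.sum_congr rfl fun l₂ _ => Finset.sum_congr rfl fun l₁ hl₁ =>
          Finset.sum_congr rfl fun u₂ _ => Finset.sum_congr rfl fun u₁ hu₁ =>
          step l₂ l₁ hl₁ u₂ u₁ hu₁
    _ = (∑ l₂ : Fin p, ∑ l₁ ∈ Iio l₂, ∑ u₂ : Fin (m + 1), ∑ u₁ ∈ Iio u₂, J l₁ u₁ * J l₂ u₂)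
        + ∑ l₂ : Fin p, ∑ l₁ ∈ Iio l₂, ∑ u₂ : Fin (m + 1), ∑ u₁ ∈ Iio u₂,
            (if l₂ = w ∧ u₂ = Fin.last m then J l₁ u₁ else 0) := by
        simp only [Finset.sum_add_distrib]
    _ = (∑ l₂ : Fin p, ∑ l₁ ∈ Iio l₂, ∑ u₂ : Fin (m + 1), ∑ u₁ ∈ Iio u₂, J l₁ u₁ * J l₂ u₂)
        + ∑ l ∈ Iio w, ∑ u ∈ Iio (Fin.last m), J l u := by
        congr 1
        have inner : ∀ l₂ : Fin p, ∀ l₁ : Fin p,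
            (∑ u₂ : Fin (m + 1), ∑ u₁ ∈ Iio u₂,
              (if l₂ = w ∧ u₂ = Fin.last m then J l₁ u₁ else 0))
            = (if l₂ = w then ∑ u₁ ∈ Iio (Fin.last m), J l₁ u₁ else 0) := by
          intro l₂ l₁
          have h2 : ∀ u₂ : Fin (m + 1),
              (∑ u₁ ∈ Iio u₂, (if l₂ = w ∧ u₂ = Fin.last m then J l₁ u₁ else 0))
              = (if u₂ = Fin.last m then (if l₂ = w then ∑ u₁ ∈ Iio (Fin.last m), J l₁ u₁ else 0)
                  else 0) := by
            intro u₂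
            rcases eq_or_ne u₂ (Fin.last m) with h | h
            · subst h
              simp only [and_true, if_pos rfl]
              exact sum_ite_const _ _ _
            · simp [h]
          rw [Finset.sum_congr rfl (fun u₂ _ => h2 u₂), Finset.sum_ite_eq' univ (Fin.last m)]
          simp
        rw [Finset.sum_congr rfl (fun l₂ _ => Finset.sum_congr rfl (fun l₁ _ => inner l₂ l₁))]
        have h3 : ∀ l₂ : Fin p,
            (∑ l₁ ∈ Iio l₂, (if l₂ = w then ∑ u₁ ∈ Iio (Fin.last m), J l₁ u₁ else 0))
            = (if l₂ = w then ∑ l₁ ∈ Iio l₂, ∑ u₁ ∈ Iio (Fin.last m), J l₁ u₁ else 0) :=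
          fun l₂ => sum_ite_const _ _ _
        rw [Finset.sum_congr rfl (fun l₂ _ => h3 l₂), Finset.sum_ite_eq' univ w]
        simp

lemma Xe_snoc {m p : ℕ} (J : Fin p → Fin (m + 1) → ℕ) (h0 : ∀ l, J l (Fin.last m) = 0) :
    Xe J = Xe (fun (l : Fin p) (v : Fin m) => J l (Fin.castSucc v)) := by
  unfold Xe
  refine Finset.sum_congr rfl fun l₂ _ => Finset.sum_congr rfl fun l₁ _ => ?_
  rw [sum_univ_last (fun u₂ => ∑ u₁ ∈ Iio u₂, J l₁ u₁ * J l₂ u₂)]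
  rw [h0 l₂]
  simp only [Nat.mul_zero, Finset.sum_const_zero, Nat.add_zero]
  rw [Iio_last_eq, Finset.sum_map]
  refine Finset.sum_congr rfl fun u₂ _ => ?_
  rw [show (Fin.castSuccEmb u₂ : Fin (m+1)) = Fin.castSucc u₂ from rfl]
  rw [sum_Iio_castSucc (fun u₁ => J l₁ u₁ * J l₂ (Fin.castSucc u₂)) u₂]

/-! ### The general theorem -/

theorem gen (N : ℕ) : ∀ (m p : ℕ) (A : Fin m → ℕ) (B : Fin p → ℕ),
    (∑ v, A v = N) → (∑ w, B w = N) →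
    qmul N B = ∑ J ∈ SS N A B, q ^ (2 * Xe J) * ∏ β, qmul (A β) (fun α => J α β) := by
  induction N with
  | zero =>
    intro m p A B hA hB
    have hA0 : ∀ v, A v = 0 := fun v => by
      have := Finset.single_le_sum (f := A) (fun _ _ => Nat.zero_le _) (Finset.mem_univ v)
      omega
    have hB0 : ∀ w, B w = 0 := fun w => by
      have := Finset.single_le_sum (f := B) (fun _ _ => Nat.zero_le _) (Finset.mem_univ w)
      omega
    have hset : SS 0 A B = {fun _ _ => 0} := by
      ext J
      rw [mem_SS (by omega), Finset.mem_singleton]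
      constructor
      · rintro ⟨_, hr⟩
        funext w v
        have h1 : J w v ≤ ∑ v', J w v' :=
          Finset.single_le_sum (fun _ _ => Nat.zero_le _) (Finset.mem_univ v)
        have h2 := hr w
        have h3 := hB0 w
        show J w v = 0
        omega
      · rintro rfl
        exact ⟨fun v => by rw [hA0 v]; simp, fun w => by rw [hB0 w]; simp⟩
    rw [hset, Finset.sum_singleton]
    have hX : Xe (fun (_ : Fin p) (_ : Fin m) => 0) = 0 := by simp [Xe]
    rw [hX]
    have hprod : ∏ β : Fin m, qmul (A β) (fun _ : Fin p => (0:ℕ)) = 1 :=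
      Finset.prod_eq_one fun β _ => by rw [hA0 β]; exact qmul_zero
    rw [hprod]
    have : qmul 0 B = qmul 0 (fun _ : Fin p => (0:ℕ)) := by
      unfold qmul; congr 1; exact Finset.prod_congr rfl fun w _ => by rw [hB0 w]
    rw [this, qmul_zero]
    simp
  | succ N ih =>
    intro m
    induction m with
    | zero =>
      intro p A B hA hB
      simp at hA
    | succ m ihm =>
      intro p A B hA hB
      rcases Nat.eq_zero_or_pos (A (Fin.last m)) with h0 | hpos
      · -- the last block is empty: drop it
        have hA' : ∑ v : Fin m, A (Fin.castSucc v) = N + 1 := by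
          rw [Fin.sum_univ_castSucc] at hA; omega
        rw [ihm p (fun v => A (Fin.castSucc v)) B hA' hB]
        refine Finset.sum_nbij' (fun J' => fun (w : Fin p) => Fin.snoc (J' w) 0)
          (fun J => fun (w : Fin p) (v : Fin m) => J w (Fin.castSucc v)) ?_ ?_ ?_ ?_ ?_
        · -- hi
          intro J' hJ'
          obtain ⟨hc', hr'⟩ := (mem_SS (le_of_eq hB)).mp hJ'
          refine (mem_SS (le_of_eq hB)).mpr ⟨?_, ?_⟩
          · intro v
            refine Fin.lastCases ?_ (fun v' => ?_) v
            · simp only [Fin.snoc_last]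
              rw [h0]
              simp
            · simp only [Fin.snoc_castSucc]
              exact hc' v'
          · intro w
            rw [Fin.sum_univ_castSucc]
            simp only [Fin.snoc_castSucc, Fin.snoc_last]
            rw [hr' w]
            omega
        · -- hj
          intro J hJ
          obtain ⟨hc, hr⟩ := (mem_SS (le_of_eq hB)).mp hJ
          have hJ0 : ∀ w, J w (Fin.last m) = 0 := by
            intro w
            have h1 : J w (Fin.last m) ≤ ∑ w', J w' (Fin.last m) :=
              Finset.single_le_sum (f := fun w' => J w' (Fin.last m))
                (fun _ _ => Nat.zero_le _) (Finset.mem_univ w)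
            have h2 := hc (Fin.last m)
            omega
          refine (mem_SS (le_of_eq hB)).mpr ⟨fun v => hc (Fin.castSucc v), ?_⟩
          intro w
          have := hr w
          rw [Fin.sum_univ_castSucc, hJ0 w] at this
          show (∑ v : Fin m, J w (Fin.castSucc v)) = B w
          omega
        · -- left inverse
          intro J' _
          funext w v
          simp only [Fin.snoc_castSucc]
        · -- right inverse
          intro J hJ
          obtain ⟨hc, _⟩ := (mem_SS (le_of_eq hB)).mp hJ
          have hJ0 : ∀ w, J w (Fin.last m) = 0 := by
            intro w
            have h1 : J w (Fin.last m) ≤ ∑ w', J w' (Fin.last m) :=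
              Finset.single_le_sum (f := fun w' => J w' (Fin.last m))
                (fun _ _ => Nat.zero_le _) (Finset.mem_univ w)
            have h2 := hc (Fin.last m)
            omega
          funext w v
          refine Fin.lastCases ?_ (fun v' => ?_) v
          · simp only [Fin.snoc_last]
            exact (hJ0 w).symm
          · simp only [Fin.snoc_castSucc]
        · -- term equality
          intro J' _
          have hX : Xe (fun (w : Fin p) => Fin.snoc (J' w) (0:ℕ)) = Xe J' := by
            rw [Xe_snoc (fun (w : Fin p) => Fin.snoc (J' w) (0:ℕ)) (fun l => by simp)]
            congr 1
            funext l v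
            simp only [Fin.snoc_castSucc]
          rw [hX, Fin.prod_univ_castSucc]
          simp only [Fin.snoc_last, Fin.snoc_castSucc]
          rw [h0, qmul_zero, mul_one]
      · -- main case: A (Fin.last m) = a' + 1
        obtain ⟨a', ha'⟩ : ∃ a', A (Fin.last m) = a' + 1 := ⟨A (Fin.last m) - 1, by omega⟩
        have hAdecomp : A (Fin.last m) + ∑ v ∈ univ.erase (Fin.last m), A v = N + 1 := by
          rw [Finset.add_sum_erase univ A (Finset.mem_univ (Fin.last m))]; exact hA
        have hA'' : ∑ v, Function.update A (Fin.last m) a' v = N := by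
          rw [Finset.sum_update_of_mem (Finset.mem_univ (Fin.last m)),
            Finset.sdiff_singleton_eq_erase]
          omega
        have expand : ∀ J ∈ SS (N+1) A B,
            q ^ (2 * Xe J) * ∏ β, qmul (A β) (fun α => J α β)
            = ∑ w : Fin p, (q ^ (2 * Xe J) * (q ^ (2 * ∑ l ∈ Iio w, J l (Fin.last m))
                * ((1 - q ^ (2 * J w (Fin.last m)))
                    * (qp a' / ∏ l, qp (J l (Fin.last m)))))
                * ∏ β ∈ univ.erase (Fin.last m), qmul (A β) (fun α => J α β)) := by
          intro J hJ
          obtain ⟨hc, hr⟩ := (mem_SS (le_of_eq hB)).mp hJ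
          have hcol : ∑ l, J l (Fin.last m) = a' + 1 := by rw [hc (Fin.last m), ha']
          rw [← Finset.mul_prod_erase univ (fun β => qmul (A β) (fun α => J α β))
            (Finset.mem_univ (Fin.last m))]
          rw [show qmul (A (Fin.last m)) (fun α => J α (Fin.last m))
              = ∑ w : Fin p, q ^ (2 * ∑ l ∈ Iio w, J l (Fin.last m))
                * ((1 - q ^ (2 * J w (Fin.last m)))
                    * (qp a' / ∏ l, qp (J l (Fin.last m)))) from by
            rw [ha']; exact pascal a' (fun l => J l (Fin.last m)) hcol]
          rw [Finset.sum_mul, Finset.mul_sum]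
          exact Finset.sum_congr rfl fun w _ => by ring
        rw [Finset.sum_congr rfl expand, Finset.sum_comm, pascal N B hB]
        refine Finset.sum_congr rfl fun w _ => ?_
        rcases Nat.eq_zero_or_pos (B w) with hBw | hBw
        · -- B w = 0 : both sides vanish
          have hz : ∀ J ∈ SS (N+1) A B,
              (q ^ (2 * Xe J) * (q ^ (2 * ∑ l ∈ Iio w, J l (Fin.last m))
                * ((1 - q ^ (2 * J w (Fin.last m)))
                    * (qp a' / ∏ l, qp (J l (Fin.last m)))))
                * ∏ β ∈ univ.erase (Fin.last m), qmul (A β) (fun α => J α β)) = 0 := by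
            intro J hJ
            obtain ⟨hc, hr⟩ := (mem_SS (le_of_eq hB)).mp hJ
            have h1 : J w (Fin.last m) = 0 := by
              have h2 : J w (Fin.last m) ≤ ∑ v, J w v :=
                Finset.single_le_sum (f := J w) (fun _ _ => Nat.zero_le _)
                  (Finset.mem_univ (Fin.last m))
              have h3 := hr w
              omega
            rw [h1]
            simp
          rw [Finset.sum_eq_zero hz, hBw]
          simp
        · -- B w = b + 1
          obtain ⟨b, hb⟩ : ∃ b, B w = b + 1 := ⟨B w - 1, by omega⟩
          have hew : Function.update B w b w = b := Function.update_self w b B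
          have he_sum : ∑ l, Function.update B w b l = N := by
            rw [Finset.sum_update_of_mem (Finset.mem_univ w), Finset.sdiff_singleton_eq_erase]
            have hBdec : B w + ∑ l ∈ univ.erase w, B l = N + 1 := by
              rw [Finset.add_sum_erase univ B (Finset.mem_univ w)]; exact hB
            omega
          have hupdate : Function.update (Function.update B w b) w
              (Function.update B w b w + 1) = B := by
            funext x
            rcases eq_or_ne x w with rfl | hx
            · rw [Function.update_self, hew, hb]
            · rw [Function.update_of_ne hx, Function.update_of_ne hx]
          have hL : (1 - q ^ (2 * B w)) * (qp N / ∏ i, qp (B i))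
              = qmul N (Function.update B w b) := by
            have hconv := conv N (Function.update B w b) w
            rw [hupdate] at hconv
            rw [← hconv, hew, hb]
          rw [hL, ih (m+1) p (Function.update A (Fin.last m) a') (Function.update B w b)
            hA'' he_sum, Finset.mul_sum]
          -- now reindex the right-hand side
          have hrestrict : ∑ J ∈ SS (N+1) A B,
              (q ^ (2 * Xe J) * (q ^ (2 * ∑ l ∈ Iio w, J l (Fin.last m))
                * ((1 - q ^ (2 * J w (Fin.last m)))
                    * (qp a' / ∏ l, qp (J l (Fin.last m)))))
                * ∏ β ∈ univ.erase (Fin.last m), qmul (A β) (fun α => J α β))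
              = ∑ J ∈ (SS (N+1) A B).filter (fun J => J w (Fin.last m) ≠ 0),
              (q ^ (2 * Xe J) * (q ^ (2 * ∑ l ∈ Iio w, J l (Fin.last m))
                * ((1 - q ^ (2 * J w (Fin.last m)))
                    * (qp a' / ∏ l, qp (J l (Fin.last m)))))
                * ∏ β ∈ univ.erase (Fin.last m), qmul (A β) (fun α => J α β)) := by
            refine (Finset.sum_subset (Finset.filter_subset _ _) ?_).symm
            intro J hJ hJn
            have h0 : J w (Fin.last m) = 0 := by
              by_contra hc0
              exact hJn (Finset.mem_filter.mpr ⟨hJ, hc0⟩)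
            rw [h0]
            simp
          rw [hrestrict]
          refine Finset.sum_nbij' (fun J' => inc J' w) (fun J => dec J w) ?_ ?_ ?_ ?_ ?_
          · -- hi : image lands in the filtered set
            intro J' hJ'
            beta_reduce
            obtain ⟨hc', hr'⟩ := (mem_SS (le_of_eq he_sum)).mp hJ'
            refine Finset.mem_filter.mpr ⟨(mem_SS (le_of_eq hB)).mpr ⟨?_, ?_⟩, ?_⟩
            · intro v
              rcases eq_or_ne v (Fin.last m) with rfl | hv
              · have hstep : ∀ l : Fin p, inc J' w l (Fin.last m)
                    = J' l (Fin.last m) + (if l = w then 1 else 0) := by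
                  intro l
                  rw [inc_apply]
                  simp
                rw [Finset.sum_congr rfl (fun l _ => hstep l), Finset.sum_add_distrib,
                  Finset.sum_ite_eq' univ w (fun _ => 1)]
                have h4 := hc' (Fin.last m)
                rw [Function.update_self] at h4
                simp only [Finset.mem_univ, if_true]
                omega
              · have hstep : ∀ l : Fin p, inc J' w l v = J' l v := fun l =>
                  inc_apply_ne J' w l v (fun hh => hv hh.2)
                rw [Finset.sum_congr rfl (fun l _ => hstep l)]
                have h4 := hc' v
                rw [Function.update_of_ne hv] at h4
                exact h4
            · intro l
              rcases eq_or_ne l w with rfl | hl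
              · have h5 : inc J' l l = Function.update (J' l) (Fin.last m)
                    (J' l (Fin.last m) + 1) := Function.update_self _ _ _
                rw [h5, Finset.sum_update_of_mem (Finset.mem_univ (Fin.last m)),
                  Finset.sdiff_singleton_eq_erase]
                have h6 : J' l (Fin.last m) + ∑ v ∈ univ.erase (Fin.last m), J' l v
                    = ∑ v, J' l v := Finset.add_sum_erase univ (J' l)
                      (Finset.mem_univ (Fin.last m))
                have h7 := hr' l
                rw [hew] at h7
                omega
              · have h5 : inc J' w l = J' l := Function.update_of_ne hl _ _
                rw [h5]
                have h7 := hr' l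
                rw [Function.update_of_ne hl] at h7
                exact h7
            · -- nonzero entry
              have h8 : inc J' w w (Fin.last m) = J' w (Fin.last m) + 1 := by
                rw [inc_apply, if_pos ⟨rfl, rfl⟩]
              rw [h8]
              omega
          · -- hj : preimage lands in SS N A'' e
            intro J hJ
            beta_reduce
            obtain ⟨hJS, hJw⟩ := Finset.mem_filter.mp hJ
            obtain ⟨hc, hr⟩ := (mem_SS (le_of_eq hB)).mp hJS
            refine (mem_SS (le_of_eq he_sum)).mpr ⟨?_, ?_⟩
            · intro v
              rcases eq_or_ne v (Fin.last m) with rfl | hv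
              · have hstep : ∀ l ∈ univ.erase w, dec J w l (Fin.last m)
                    = J l (Fin.last m) := by
                  intro l hl
                  have hlw : l ≠ w := (Finset.mem_erase.mp hl).1
                  show Function.update J w _ l (Fin.last m) = _
                  rw [Function.update_of_ne hlw]
                have hdw : dec J w w (Fin.last m) = J w (Fin.last m) - 1 := by
                  show Function.update J w _ w (Fin.last m) = _
                  rw [Function.update_self, Function.update_self]
                have h9 : dec J w w (Fin.last m)
                      + ∑ l ∈ univ.erase w, dec J w l (Fin.last m)
                    = ∑ l, dec J w l (Fin.last m) :=
                  Finset.add_sum_erase univ (fun l => dec J w l (Fin.last m))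
                    (Finset.mem_univ w)
                have h10 : J w (Fin.last m) + ∑ l ∈ univ.erase w, J l (Fin.last m)
                    = ∑ l, J l (Fin.last m) :=
                  Finset.add_sum_erase univ (fun l => J l (Fin.last m)) (Finset.mem_univ w)
                have h11 := hc (Fin.last m)
                rw [Finset.sum_congr rfl hstep] at h9
                rw [Function.update_self]
                omega
              · have hstep : ∀ l : Fin p, dec J w l v = J l v := by
                  intro l
                  rcases eq_or_ne l w with rfl | hl
                  · show Function.update J l _ l v = _
                    rw [Function.update_self, Function.update_of_ne hv]
                  · show Function.update J w _ l v = _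
                    rw [Function.update_of_ne hl]
                rw [Finset.sum_congr rfl (fun l _ => hstep l), Function.update_of_ne hv]
                exact hc v
            · intro l
              rcases eq_or_ne l w with rfl | hl
              · have hdl : dec J l l = Function.update (J l) (Fin.last m)
                    (J l (Fin.last m) - 1) := Function.update_self _ _ _
                rw [hdl, Finset.sum_update_of_mem (Finset.mem_univ (Fin.last m)),
                  Finset.sdiff_singleton_eq_erase, hew]
                have h6 : J l (Fin.last m) + ∑ v ∈ univ.erase (Fin.last m), J l v
                    = ∑ v, J l v := Finset.add_sum_erase univ (J l)
                      (Finset.mem_univ (Fin.last m))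
                have h7 := hr l
                omega
              · have h5 : dec J w l = J l := Function.update_of_ne hl _ _
                rw [h5, Function.update_of_ne hl]
                exact hr l
          · -- left inverse
            intro J' _
            beta_reduce
            unfold inc dec
            simp only [Function.update_idem, Function.update_self, Nat.add_sub_cancel,
              Function.update_eq_self]
          · -- right inverse
            intro J hJ
            beta_reduce
            obtain ⟨_, hJw⟩ := Finset.mem_filter.mp hJ
            have hpos' : 1 ≤ J w (Fin.last m) := Nat.one_le_iff_ne_zero.mpr hJw
            unfold inc dec
            simp only [Function.update_idem, Function.update_self]
            rw [Nat.sub_add_cancel hpos']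
            simp only [Function.update_eq_self]
          · -- term equality
            intro J' hJ'
            beta_reduce
            obtain ⟨hc', hr'⟩ := (mem_SS (le_of_eq he_sum)).mp hJ'
            have hXi := Xe_inc J' w
            have hSum : ∑ l ∈ Iio w, inc J' w l (Fin.last m)
                = ∑ l ∈ Iio w, J' l (Fin.last m) := by
              refine Finset.sum_congr rfl fun l hl => ?_
              exact inc_apply_ne J' w l _ (fun hh => (ne_of_lt (Finset.mem_Iio.mp hl)) hh.1)
            have hw8 : inc J' w w (Fin.last m) = J' w (Fin.last m) + 1 := by
              rw [inc_apply, if_pos ⟨rfl, rfl⟩]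
            have hprodcol : ∀ l : Fin p, inc J' w l (Fin.last m)
                = Function.update (fun l => J' l (Fin.last m)) w (J' w (Fin.last m) + 1) l := by
              intro l
              rcases eq_or_ne l w with rfl | hl
              · rw [hw8, Function.update_self]
              · rw [inc_apply_ne J' w l _ (fun hh => hl hh.1), Function.update_of_ne hl]
            have hprod2 : ∏ l, qp (inc J' w l (Fin.last m))
                = ∏ l, qp (Function.update (fun l => J' l (Fin.last m)) w
                    (J' w (Fin.last m) + 1) l) :=
              Finset.prod_congr rfl fun l _ => by rw [hprodcol l]
            have hconv : (1 - q ^ (2 * (J' w (Fin.last m) + 1)))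
                * (qp a' / ∏ l, qp (Function.update (fun l => J' l (Fin.last m)) w
                    (J' w (Fin.last m) + 1) l))
                = qmul a' (fun l => J' l (Fin.last m)) := conv a' (fun l => J' l (Fin.last m)) w
            have hP : ∏ β ∈ univ.erase (Fin.last m), qmul (A β) (fun α => inc J' w α β)
                = ∏ β ∈ univ.erase (Fin.last m),
                    qmul (Function.update A (Fin.last m) a' β) (fun α => J' α β) := by
              refine Finset.prod_congr rfl fun β hβ => ?_
              have hβn : β ≠ Fin.last m := (Finset.mem_erase.mp hβ).1
              rw [Function.update_of_ne hβn]
              congr 1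
              funext α
              exact inc_apply_ne J' w α β (fun hh => hβn hh.2)
            have hexp : (∑ l ∈ Iio w, ∑ u ∈ Iio (Fin.last m), J' l u)
                + ∑ l ∈ Iio w, J' l (Fin.last m) = ∑ l ∈ Iio w, B l := by
              rw [← Finset.sum_add_distrib]
              refine Finset.sum_congr rfl fun l hl => ?_
              have h12 : (∑ u ∈ Iio (Fin.last m), J' l u) + J' l (Fin.last m)
                  = ∑ u, J' l u := (sum_univ_last (J' l)).symm
              have h13 := hr' l
              rw [Function.update_of_ne (ne_of_lt (Finset.mem_Iio.mp hl))] at h13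
              rw [h12, h13]
            have hsplit : ∏ β, qmul (Function.update A (Fin.last m) a' β) (fun α => J' α β)
                = qmul a' (fun l => J' l (Fin.last m))
                  * ∏ β ∈ univ.erase (Fin.last m),
                      qmul (Function.update A (Fin.last m) a' β) (fun α => J' α β) := by
              rw [← Finset.mul_prod_erase univ
                (fun β => qmul (Function.update A (Fin.last m) a' β) (fun α => J' α β))
                (Finset.mem_univ (Fin.last m)), Function.update_self]
            show q ^ (2 * ∑ l ∈ Iio w, B l)
                * (q ^ (2 * Xe J')
                  * ∏ β, qmul (Function.update A (Fin.last m) a' β) (fun α => J' α β))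
              = q ^ (2 * Xe (inc J' w)) * (q ^ (2 * ∑ l ∈ Iio w, inc J' w l (Fin.last m))
                * ((1 - q ^ (2 * inc J' w w (Fin.last m)))
                    * (qp a' / ∏ l, qp (inc J' w l (Fin.last m)))))
                * ∏ β ∈ univ.erase (Fin.last m), qmul (A β) (fun α => inc J' w α β)
            rw [hXi, hSum, hw8, hprod2, hconv, hP, hsplit]
            rw [show 2 * (Xe J' + ∑ l ∈ Iio w, ∑ u ∈ Iio (Fin.last m), J' l u)
                = 2 * Xe J' + 2 * ∑ l ∈ Iio w, ∑ u ∈ Iio (Fin.last m), J' l u from by ring,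
              pow_add]
            rw [show 2 * ∑ l ∈ Iio w, B l = 2 * ((∑ l ∈ Iio w, ∑ u ∈ Iio (Fin.last m), J' l u)
                + ∑ l ∈ Iio w, J' l (Fin.last m)) from by rw [hexp],
              Nat.mul_add, pow_add]
            ring

/-- Lemma 4.6 of KRSS: expansion of a quantum multinomial coefficient. -/
theorem qmultinomial_expansion (m p N : ℕ) (hm : 1 ≤ m) (hp : 1 ≤ p)
    (A : Fin m → ℕ) (B : Fin p → ℕ) (hA : ∑ v, A v = N) (hB : ∑ w, B w = N) :
    qmul N B =
      ∑ J ∈ (Fintype.piFinset fun _ : Fin p =>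
            Fintype.piFinset fun _ : Fin m => Finset.range (N + 1)).filter
          (fun J => (∀ v : Fin m, ∑ w : Fin p, J w v = A v) ∧
            (∀ w : Fin p, ∑ v : Fin m, J w v = B w)),
        q ^ (2 * ∑ l₂ : Fin p, ∑ l₁ ∈ Finset.Iio l₂,
              ∑ u₂ : Fin m, ∑ u₁ ∈ Finset.Iio u₂, J l₁ u₁ * J l₂ u₂) *
          ∏ β : Fin m, qmul (A β) (fun α : Fin p => J α β) := by
  exact gen N m p A B hA hB
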